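/- Let p be a prime with p ≡ 2 (mod 3) or p = 3, and let i be an integer. Then Σ_{j=0}^{p-1} (j/p)·((i²+3ij+3j²)/p) = 0. -/

import Mathlib

open Finset

lemma cube_pow_id {p : ℕ} [Fact p.Prime] (hp : p % 3 = 2) (z : ZMod p) :
    (z ^ 3) ^ (2 * (p / 3) + 1) = z := by
  have hk : 3 * (2 * (p / 3) + 1) = (p - 1) * 2 + 1 := by omega
  rw [← pow_mul, hk]
  rcases eq_or_ne z 0 with rfl | hz
  · rw [zero_pow]; omega
  · rw [pow_succ, pow_mul, ZMod.pow_card_sub_one_eq_one hz, one_pow, one_mul]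

theorem stmt_5 (p : ℕ) [Fact p.Prime] (hp2 : p ≠ 2)
    (hp : p % 3 = 2 ∨ p = 3) (i : ℤ) :
    ∑ j ∈ Finset.range p,
        legendreSym p j * legendreSym p (i ^ 2 + 3 * i * j + 3 * j ^ 2) = 0 := by
  have hp' : p.Prime := Fact.out
  have hchar : ringChar (ZMod p) ≠ 2 := by
    rw [ZMod.ringChar_zmod_n]; exact hp2
  set χ := quadraticChar (ZMod p)
  set F : ZMod p → ℤ := fun x =>
    χ (x * ((i : ZMod p) ^ 2 + 3 * (i : ZMod p) * x + 3 * x ^ 2)) with hF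
  have step1 : ∀ j : ℕ,
      legendreSym p j * legendreSym p (i ^ 2 + 3 * i * j + 3 * j ^ 2)
        = F ((j : ZMod p)) := by
    intro j
    rw [← legendreSym.mul]
    show χ _ = χ _
    push_cast
    ring_nf
  have step2 : ∑ j ∈ Finset.range p, legendreSym p j *
      legendreSym p (i ^ 2 + 3 * i * j + 3 * j ^ 2) = ∑ x : ZMod p, F x := by
    rw [Finset.sum_congr rfl fun j _ => step1 j]
    refine Finset.sum_nbij' (fun j => (j : ZMod p)) (fun x => x.val) ?_ ?_ ?_ ?_ ?_
    · intro j _; exact Finset.mem_univ _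
    · intro x _; exact Finset.mem_range.mpr (ZMod.val_lt x)
    · intro j hj; exact ZMod.val_natCast_of_lt (Finset.mem_range.mp hj)
    · intro x _; exact ZMod.natCast_rightInverse x
    · intro j _; rfl
  rw [step2]
  rcases hp with hp3 | rfl
  · -- p % 3 = 2
    have h3 : (3 : ZMod p) ≠ 0 := by
      intro h
      have hd := (ZMod.natCast_eq_zero_iff 3 p).mp (by exact_mod_cast h)
      have := (Nat.prime_dvd_prime_iff_eq hp' (by norm_num)).mp hd
      omega
    set a : ZMod p := (i : ZMod p) * (3 : ZMod p)⁻¹ with ha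
    have h3a : (3 : ZMod p) * a = (i : ZMod p) := by
      rw [ha]; field_simp
    have key : ∀ x : ZMod p,
        x * ((i : ZMod p) ^ 2 + 3 * (i : ZMod p) * x + 3 * x ^ 2)
          = 3 * (x + a) ^ 3 - 3 * a ^ 3 := by
      intro x; rw [← h3a]; ring
    have hFe : F = fun x => χ (3 * (x + a) ^ 3 - 3 * a ^ 3) := by
      funext x; rw [hF]; simp only [key]
    rw [hFe]
    have hbij : Function.Bijective (fun x : ZMod p => 3 * (x + a) ^ 3 - 3 * a ^ 3) := by
      rw [Fintype.bijective_iff_injective_and_card]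
      refine ⟨?_, rfl⟩
      intro x y h
      simp only [sub_left_inj] at h
      have h2 : (x + a) ^ 3 = (y + a) ^ 3 := mul_left_cancel₀ h3 h
      have := congrArg (· ^ (2 * (p / 3) + 1)) h2
      simp only [cube_pow_id hp3] at this
      exact add_right_cancel this
    calc (∑ x : ZMod p, χ (3 * (x + a) ^ 3 - 3 * a ^ 3)) = ∑ x : ZMod p, χ x :=
          hbij.sum_comp _
      _ = 0 := quadraticChar_sum_zero hchar
  · -- p = 3
    have h30 : (3 : ZMod 3) = 0 := rfl
    have hFe : F = fun x => χ x * χ ((i : ZMod 3) ^ 2) := by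
      funext x
      rw [hF]
      simp only [h30, zero_mul, mul_zero, add_zero, map_mul]
    rw [hFe, ← Finset.sum_mul, quadraticChar_sum_zero hchar, zero_mul]
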